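/- Let n ≥ 2, let θ : Fin n → Fin n → ℝ, let w : Fin n → ℝ satisfy 1 ≤ w j ≤ W for all j, and let τ ∈ ℝ, β > 0, δ > 0. For each i define Aᵢ = (∑_{j ≠ i} exp(β · θ i j) · w j) / (∑_{k ≠ i} exp(β · θ i k) + exp(β · τ)). Then: (a) if there exist i ≠ j with θ i j ≥ τ, then there exists i with Aᵢ ≥ 1/n; and (b) if θ i j ≤ τ − δ for all i ≠ j, then Aᵢ ≤ W · n · exp(−β · δ) for every i. -/
import Mathlib


open Finset

/-- A generic gap lemma for softmax attention scores with an appended threshold token. -/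
theorem stmt7 (n : ℕ) (hn : 2 ≤ n)
    (θ : Fin n → Fin n → ℝ) (w : Fin n → ℝ) (W : ℝ)
    (hw : ∀ j, 1 ≤ w j ∧ w j ≤ W)
    (τ β δ : ℝ) (hβ : 0 < β) (hδ : 0 < δ)
    (A : Fin n → ℝ)
    (hA : ∀ i, A i =
      (∑ j ∈ Finset.univ.erase i, Real.exp (β * θ i j) * w j) /
        ((∑ k ∈ Finset.univ.erase i, Real.exp (β * θ i k)) + Real.exp (β * τ))) :
    ((∃ i j : Fin n, i ≠ j ∧ τ ≤ θ i j) → ∃ i, 1 / (n : ℝ) ≤ A i) ∧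
    ((∀ i j : Fin n, i ≠ j → θ i j ≤ τ - δ) →
      ∀ i, A i ≤ W * n * Real.exp (-(β * δ))) := by
  have hn2 : (2:ℝ) ≤ (n:ℝ) := by exact_mod_cast hn
  constructor
  · rintro ⟨i, j, hij, hτ⟩
    refine ⟨i, ?_⟩
    rw [hA i]
    set S := ∑ k ∈ Finset.univ.erase i, Real.exp (β * θ i k) with hS
    have hjmem : j ∈ Finset.univ.erase i := by
      simp [Finset.mem_erase, Ne.symm hij]
    have hSpos : 0 < S := Finset.sum_pos (fun k _ => Real.exp_pos _) ⟨j, hjmem⟩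
    have hnum : S ≤ ∑ k ∈ Finset.univ.erase i, Real.exp (β * θ i k) * w k := by
      apply Finset.sum_le_sum
      intro k _
      nlinarith [(hw k).1, Real.exp_pos (β * θ i k)]
    have hτle : Real.exp (β * τ) ≤ S := by
      calc Real.exp (β * τ) ≤ Real.exp (β * θ i j) := by
            apply Real.exp_le_exp.2; nlinarith
        _ ≤ S := Finset.single_le_sum (f := fun k => Real.exp (β * θ i k)) (fun k _ => (Real.exp_pos _).le) hjmem
    have hden : 0 < S + Real.exp (β * τ) := by positivity
    rw [le_div_iff₀ hden]
    have hninv : 1 / (n:ℝ) ≤ 1 / 2 := by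
      apply one_div_le_one_div_of_le <;> linarith
    nlinarith [hninv, hτle, hnum, hSpos, Real.exp_pos (β * τ)]
  · intro h i
    rw [hA i]
    have hden : 0 < (∑ k ∈ Finset.univ.erase i, Real.exp (β * θ i k)) + Real.exp (β * τ) := by
      positivity
    rw [div_le_iff₀ hden]
    have hW : 1 ≤ W := le_trans (hw i).1 (hw i).2
    have hnum : (∑ j ∈ Finset.univ.erase i, Real.exp (β * θ i j) * w j)
        ≤ ((n:ℝ) - 1) * (W * Real.exp (β * (τ - δ))) := by
      have hbd : ∀ j ∈ Finset.univ.erase i, Real.exp (β * θ i j) * w j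
          ≤ W * Real.exp (β * (τ - δ)) := by
        intro j hj
        have hji : j ≠ i := (Finset.mem_erase.1 hj).1
        have h1 : Real.exp (β * θ i j) ≤ Real.exp (β * (τ - δ)) := by
          apply Real.exp_le_exp.2
          have := h i j (Ne.symm hji)
          nlinarith
        nlinarith [(hw j).1, (hw j).2, Real.exp_pos (β * θ i j),
          Real.exp_pos (β * (τ - δ))]
      calc (∑ j ∈ Finset.univ.erase i, Real.exp (β * θ i j) * w j)
          ≤ ∑ _j ∈ Finset.univ.erase i, W * Real.exp (β * (τ - δ)) :=
            Finset.sum_le_sum hbd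
        _ = ((n:ℝ) - 1) * (W * Real.exp (β * (τ - δ))) := by
            rw [Finset.sum_const, Finset.card_erase_of_mem (Finset.mem_univ i)]
            simp only [Finset.card_univ, Fintype.card_fin, nsmul_eq_mul]
            rw [Nat.cast_sub (by omega : 1 ≤ n)]
            norm_num
    have hsum_nonneg : 0 ≤ ∑ k ∈ Finset.univ.erase i, Real.exp (β * θ i k) :=
      Finset.sum_nonneg fun k _ => (Real.exp_pos _).le
    calc (∑ j ∈ Finset.univ.erase i, Real.exp (β * θ i j) * w j)
        ≤ ((n:ℝ) - 1) * (W * Real.exp (β * (τ - δ))) := hnum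
      _ ≤ (n:ℝ) * (W * Real.exp (β * (τ - δ))) := by
          apply mul_le_mul_of_nonneg_right (by linarith)
          have : (0:ℝ) ≤ W := by linarith
          positivity
      _ = W * n * Real.exp (-(β * δ)) * Real.exp (β * τ) := by
          rw [mul_assoc, ← Real.exp_add]; ring_nf
      _ ≤ W * n * Real.exp (-(β * δ)) *
          ((∑ k ∈ Finset.univ.erase i, Real.exp (β * θ i k)) + Real.exp (β * τ)) := by
          apply mul_le_mul_of_nonneg_left (by linarith)
          have : (0:ℝ) ≤ W := by linarith
          positivity
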